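/- Let P be a convex polygon in R² that is the convex hull of finitely many vertices v₁,...,v_m, and consider two homothets H̄ = ᾱP + β̄ and H̲ = α̲P + β̲ with ᾱ ≥ α̲ > 0. Then the Hausdorff-type maximal distance sup_{x ∈ H̄} dist(x, H̲) is attained at a vertex of H̄ and equals max_i ‖(ᾱ − α̲)v_i + β̄ − β̲‖₂ whenever H̲ ⊆ H̄. -/

import Mathlib

open Pointwise

set_option maxHeartbeats 1000000

open Pointwise


private lemma aux_biSup_eq {α : Type*} {S : Set α} {f : α → ℝ} {M : ℝ} (hM : 0 ≤ M)
    (hub : ∀ x ∈ S, f x ≤ M) {x₀ : α} (hx₀ : x₀ ∈ S) (hfx₀ : f x₀ = M) :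
    (⨆ x ∈ S, f x) = M := by
  have hbdd : ∀ x, (⨆ _ : x ∈ S, f x) ≤ M := fun x => Real.iSup_le (fun hx => hub x hx) hM
  refine le_antisymm (Real.iSup_le hbdd hM) ?_
  calc M = f x₀ := hfx₀.symm
    _ = ⨆ _ : x₀ ∈ S, f x₀ := (ciSup_pos (f := fun _ : x₀ ∈ S => f x₀) hx₀).symm
    _ ≤ ⨆ x, ⨆ _ : x ∈ S, f x :=
        le_ciSup ⟨M, by rintro _ ⟨x, rfl⟩; exact hbdd x⟩ x₀

/-- For nested homothets of a convex polygon P = conv{v₁,…,vₘ}, the maximal distance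
from a point of the outer homothet to the inner ℝ homothet equals
max_i ‖(ᾱ − α̲)vᵢ + β̄ − β̲‖, and it is attained at a vertex of the outer homothet. -/
theorem distance_metric_homothets {m : ℕ} (hm : 0 < m)
    (v : Fin m → EuclideanSpace ℝ (Fin 2))
    (aOut aIn : ℝ) (bOut bIn : EuclideanSpace ℝ (Fin 2))
    (hIn : 0 < aIn) (hle : aIn ≤ aOut)
    (hsub : aIn • convexHull ℝ (Set.range v) + {bIn}
      ⊆ aOut • convexHull ℝ (Set.range v) + {bOut}) :
    (⨆ x ∈ aOut • convexHull ℝ (Set.range v) + {bOut},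
        Metric.infDist x (aIn • convexHull ℝ (Set.range v) + {bIn}))
      = (⨆ i, ‖(aOut - aIn) • v i + (bOut - bIn)‖) ∧
    (∃ i : Fin m,
      Metric.infDist (aOut • v i + bOut) (aIn • convexHull ℝ (Set.range v) + {bIn})
        = ⨆ x ∈ aOut • convexHull ℝ (Set.range v) + {bOut},
            Metric.infDist x (aIn • convexHull ℝ (Set.range v) + {bIn})) := by
  classical
  haveI : Nonempty (Fin m) := ⟨⟨0, hm⟩⟩
  set K : Set (EuclideanSpace ℝ (Fin 2)) := convexHull ℝ (Set.range v) with hKdef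
  set t : ℝ := aOut - aIn with htdef
  set c : EuclideanSpace ℝ (Fin 2) := bOut - bIn with hcdef
  have ht0 : 0 ≤ t := sub_nonneg.2 hle
  have hvK : ∀ j, v j ∈ K := fun j => subset_convexHull ℝ _ ⟨j, rfl⟩
  -- membership characterization
  have hmem : ∀ (a : ℝ) (b x : EuclideanSpace ℝ (Fin 2)),
      x ∈ a • K + {b} ↔ ∃ y ∈ K, x = a • y + b := by
    intro a b x
    constructor
    · rintro ⟨p, hp, q, hq, rfl⟩
      rcases hp with ⟨y, hy, rfl⟩
      rcases hq with rfl
      exact ⟨y, hy, rfl⟩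
    · rintro ⟨y, hy, rfl⟩
      exact ⟨a • y, Set.smul_mem_smul_set hy, b, rfl, rfl⟩
  have hInne : (aIn • K + {bIn}).Nonempty :=
    ⟨aIn • v ⟨0, hm⟩ + bIn, (hmem _ _ _).2 ⟨v ⟨0, hm⟩, hvK _, rfl⟩⟩
  -- pick the maximizing vertex
  obtain ⟨i, hi⟩ := Finite.exists_max (fun j => ‖t • v j + c‖)
  set u : EuclideanSpace ℝ (Fin 2) := t • v i + c with hudef
  have hu0 : 0 ≤ ‖u‖ := norm_nonneg _
  -- Lemma A : ∀ y ∈ K, ‖t•y+c‖ ≤ ‖u‖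
  have lemA : ∀ y ∈ K, ‖t • y + c‖ ≤ ‖u‖ := by
    intro y hy
    have hconv : Convex ℝ {y : EuclideanSpace ℝ (Fin 2) | ‖t • y + c‖ ≤ ‖u‖} := by
      intro p hp q hq a b ha hb hab
      have hc' : a • c + b • c = c := by
        rw [← add_smul, hab, one_smul]
      have heq : t • (a • p + b • q) + c = a • (t • p + c) + b • (t • q + c) := by
        calc t • (a • p + b • q) + c
            = t • (a • p) + t • (b • q) + (a • c + b • c) := by rw [smul_add, hc']
          _ = a • (t • p) + a • c + (b • (t • q) + b • c) := by
              rw [smul_comm t a, smul_comm t b]; abel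
          _ = a • (t • p + c) + b • (t • q + c) := by rw [smul_add, smul_add]
      show ‖t • (a • p + b • q) + c‖ ≤ ‖u‖
      rw [heq]
      calc ‖a • (t • p + c) + b • (t • q + c)‖
          ≤ ‖a • (t • p + c)‖ + ‖b • (t • q + c)‖ := norm_add_le _ _
        _ = a * ‖t • p + c‖ + b * ‖t • q + c‖ := by
            rw [norm_smul, norm_smul, Real.norm_eq_abs, Real.norm_eq_abs,
              abs_of_nonneg ha, abs_of_nonneg hb]
        _ ≤ a * ‖u‖ + b * ‖u‖ := by
            gcongr
            exacts [hp, hq]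
        _ = ‖u‖ := by rw [← add_mul, hab, one_mul]
    have : K ⊆ {y | ‖t • y + c‖ ≤ ‖u‖} :=
      convexHull_min (by rintro _ ⟨j, rfl⟩; exact hi j) hconv
    exact this hy
  -- linear maximality at vertex i: ∀ y ∈ K, ⟪y,u⟫ ≤ ⟪v i,u⟫ (when u ≠ 0)
  have hlin : u ≠ 0 → ∀ y ∈ K, (inner ℝ y u : ℝ) ≤ inner ℝ (v i) u := by
    intro hu y hy
    rcases lt_or_eq_of_le ht0 with htpos | hteq
    · have h1 : (inner ℝ (t • y + c) u : ℝ) ≤ ‖t • y + c‖ * ‖u‖ := real_inner_le_norm _ _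
      have h2 : ‖t • y + c‖ * ‖u‖ ≤ ‖u‖ * ‖u‖ := by
        have := lemA y hy
        nlinarith [norm_nonneg u]
      have h3 : (‖u‖ : ℝ) * ‖u‖ = inner ℝ u u := (real_inner_self_eq_norm_mul_norm u).symm
      have h4 : (inner ℝ (t • y + c) u : ℝ) = t * inner ℝ y u + inner ℝ c u := by
        rw [inner_add_left, real_inner_smul_left]
      have h5 : (inner ℝ u u : ℝ) = t * inner ℝ (v i) u + inner ℝ c u := by
        rw [hudef, inner_add_left, real_inner_smul_left]
      have h6 : t * inner ℝ y u + inner ℝ c u ≤ t * inner ℝ (v i) u + inner ℝ c u := by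
        rw [← h4, ← h5]; exact h1.trans (h2.trans_eq h3)
      exact le_of_mul_le_mul_left (by linarith) htpos
    · -- t = 0: show c = 0, contradiction with u ≠ 0
      exfalso
      apply hu
      have hc0 : c = 0 := by
        have hKcpt : IsCompact K := (Set.finite_range v).isCompact_convexHull (𝕜 := ℝ)
        have hKne : K.Nonempty := ⟨v ⟨0, hm⟩, hvK _⟩
        have hcont : ContinuousOn (fun y : EuclideanSpace ℝ (Fin 2) => (inner ℝ y (-c) : ℝ)) K :=
          (continuous_id.inner continuous_const).continuousOn
        obtain ⟨y₀, hy₀K, hy₀max⟩ := hKcpt.exists_isMaxOn hKne hcont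
        have hz : aIn • y₀ + bIn ∈ aOut • K + {bOut} :=
          hsub ((hmem _ _ _).2 ⟨y₀, hy₀K, rfl⟩)
        obtain ⟨w, hwK, hw⟩ := (hmem _ _ _).1 hz
        have haa : aOut = aIn := by rw [htdef] at hteq; linarith
        have h1 : (inner ℝ (aIn • y₀ + bIn) (-c) : ℝ)
            = aIn * inner ℝ y₀ (-c) + inner ℝ bIn (-c) := by
          rw [inner_add_left, real_inner_smul_left]
        have h2 : (inner ℝ (aIn • y₀ + bIn) (-c) : ℝ)
            = aIn * inner ℝ w (-c) + inner ℝ bOut (-c) := by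
          rw [hw, haa, inner_add_left, real_inner_smul_left]
        have h3 : (inner ℝ w (-c) : ℝ) ≤ inner ℝ y₀ (-c) := hy₀max hwK
        have h4 : (inner ℝ bIn (-c) : ℝ) ≤ inner ℝ bOut (-c) := by nlinarith
        have h5 : (inner ℝ (bIn - bOut) (-c) : ℝ) ≤ 0 := by
          rw [inner_sub_left]; linarith
        have h6 : bIn - bOut = -c := by rw [hcdef]; abel
        rw [h6] at h5
        have := real_inner_self_nonpos.mp h5
        simpa using this
      rw [hudef, hc0, ← hteq]
      simp
  -- Lemma B : infDist at the vertex
  have lemB : Metric.infDist (aOut • v i + bOut) (aIn • K + {bIn}) = ‖u‖ := by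
    have hxz : (aOut • v i + bOut) - (aIn • v i + bIn) = u := by
      rw [hudef, htdef, hcdef, sub_smul]; abel
    apply le_antisymm
    · have hmemz : aIn • v i + bIn ∈ aIn • K + {bIn} := (hmem _ _ _).2 ⟨v i, hvK i, rfl⟩
      calc Metric.infDist (aOut • v i + bOut) (aIn • K + {bIn})
          ≤ dist (aOut • v i + bOut) (aIn • v i + bIn) :=
            Metric.infDist_le_dist_of_mem hmemz
        _ = ‖u‖ := by rw [dist_eq_norm, hxz]
    · by_cases hu : u = 0
      · rw [hu, norm_zero]; exact Metric.infDist_nonneg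
      · have hupos : 0 < ‖u‖ := norm_pos_iff.2 hu
        rw [Metric.infDist_eq_iInf]
        have : Nonempty ↥(aIn • K + {bIn}) := hInne.to_subtype
        apply le_ciInf
        rintro ⟨z, hz⟩
        obtain ⟨y, hy, rfl⟩ := (hmem _ _ _).1 hz
        have hdiff : (aOut • v i + bOut) - (aIn • y + bIn) = u + aIn • (v i - y) := by
          rw [hudef, htdef, hcdef, sub_smul, smul_sub]; abel
        have hinner : ‖u‖ * ‖u‖ ≤ inner ℝ ((aOut • v i + bOut) - (aIn • y + bIn)) u := by
          rw [hdiff, inner_add_left, real_inner_smul_left, inner_sub_left,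
            ← real_inner_self_eq_norm_mul_norm]
          have := hlin hu y hy
          nlinarith
        have hcs : (inner ℝ ((aOut • v i + bOut) - (aIn • y + bIn)) u : ℝ)
            ≤ ‖(aOut • v i + bOut) - (aIn • y + bIn)‖ * ‖u‖ := real_inner_le_norm _ _
        have : ‖u‖ * ‖u‖ ≤ ‖(aOut • v i + bOut) - (aIn • y + bIn)‖ * ‖u‖ :=
          hinner.trans hcs
        have hnorm : ‖u‖ ≤ ‖(aOut • v i + bOut) - (aIn • y + bIn)‖ :=
          le_of_mul_le_mul_right this hupos
        simpa [dist_eq_norm] using hnorm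
  -- upper bound for all points of the outer homothet
  have hub : ∀ x ∈ aOut • K + {bOut}, Metric.infDist x (aIn • K + {bIn}) ≤ ‖u‖ := by
    intro x hx
    obtain ⟨y, hy, rfl⟩ := (hmem _ _ _).1 hx
    have hmemz : aIn • y + bIn ∈ aIn • K + {bIn} := (hmem _ _ _).2 ⟨y, hy, rfl⟩
    calc Metric.infDist (aOut • y + bOut) (aIn • K + {bIn})
        ≤ dist (aOut • y + bOut) (aIn • y + bIn) := Metric.infDist_le_dist_of_mem hmemz
      _ = ‖t • y + c‖ := by
          rw [dist_eq_norm]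
          congr 1
          rw [htdef, hcdef, sub_smul]; abel
      _ ≤ ‖u‖ := lemA y hy
  -- the iSup over vertices equals ‖u‖
  have hsupv : (⨆ j, ‖t • v j + c‖) = ‖u‖ := by
    apply le_antisymm
    · exact ciSup_le (f := fun j => ‖t • v j + c‖) fun j => hi j
    · exact le_ciSup (f := fun j => ‖t • v j + c‖) (Set.finite_range _).bddAbove i
  have hxi : aOut • v i + bOut ∈ aOut • K + {bOut} := (hmem _ _ _).2 ⟨v i, hvK i, rfl⟩
  have hsup : (⨆ x ∈ aOut • K + {bOut},
      Metric.infDist x (aIn • K + {bIn})) = ‖u‖ :=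
    aux_biSup_eq hu0 hub hxi lemB
  exact ⟨hsup.trans hsupv.symm, ⟨i, lemB.trans hsup.symm⟩⟩
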